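/- Let m ≥ 2 and k ≥ (m-1)/2. Then every nontrivial coset of RM(k,m) in F₂^{2^m} contains strictly fewer balanced words than RM(k,m) itself. -/

import Mathlib

/-- Weight of a Boolean function: number of inputs mapped to 1. -/
def wtF {m : ℕ} (f : (Fin m → ZMod 2) → ZMod 2) : ℕ :=
  (Finset.univ.filter fun x => f x = 1).card

/-- The Reed–Muller code RM(r,m): the span of the monomial functions of degree ≤ r,
i.e. truth tables of Boolean functions in m variables of degree at most r. -/
def RM (r m : ℕ) : Submodule (ZMod 2) ((Fin m → ZMod 2) → ZMod 2) :=
  Submodule.span (ZMod 2)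
    {f | ∃ S : Finset (Fin m), S.card ≤ r ∧ f = fun x => ∏ i ∈ S, x i}

namespace RMAux

open Finset

attribute [local instance] Classical.propDecidable

lemma z01 : ∀ z : ZMod 2, z = 0 ∨ z = 1 := by decide

/-- The sign character. -/
def χ (z : ZMod 2) : ℤ := if z = 0 then 1 else -1

lemma χ_add : ∀ y z : ZMod 2, χ (y + z) = χ y * χ z := by decide

lemma χ_zero : χ 0 = 1 := rfl

lemma χ_one : χ 1 = -1 := rfl

lemma χ_cases : ∀ z : ZMod 2, χ z = 1 ∨ χ z = -1 := by decide

lemma χ_natCast (c : ℕ) : χ (c : ZMod 2) = (-1) ^ c := by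
  induction c with
  | zero => simp [χ]
  | succ n ih =>
      push_cast
      rw [χ_add, ih, χ_one, pow_succ]

section Generic

variable {α : Type*} [Fintype α] [DecidableEq α]

/-- indicator function of a finset -/
def ind (T : Finset α) : α → ZMod 2 := fun i => if i ∈ T then 1 else 0

/-- support of a ZMod 2 valued function -/
def suppF (f : α → ZMod 2) : Finset α := univ.filter fun i => f i = 1

lemma supp_ind (T : Finset α) : suppF (ind T) = T := by
  ext i
  simp [suppF, ind]

lemma ind_supp (f : α → ZMod 2) : ind (suppF f) = f := by
  funext i
  rcases z01 (f i) with h | h <;> simp [ind, suppF, h]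

lemma card_forall_one (S : Finset α)
    [DecidablePred fun f : α → ZMod 2 => ∀ i ∈ S, f i = 1] :
    (univ.filter fun f : α → ZMod 2 => ∀ i ∈ S, f i = 1).card
      = 2 ^ (Fintype.card α - S.card) := by
  have h2 : ((Sᶜ).powerset).card = 2 ^ (Fintype.card α - S.card) := by
    rw [card_powerset, card_compl]
  rw [← h2]
  apply Finset.card_nbij' (fun f => suppF f \ S) (fun T => ind (T ∪ S))
  · intro f hf
    simp only [mem_coe, mem_filter, mem_univ, true_and] at hf
    simp only [mem_coe, mem_powerset]
    intro i hi
    simp only [mem_sdiff] at hi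
    simp [mem_compl, hi.2]
  · intro T hT
    simp only [mem_coe, mem_powerset] at hT
    simp only [mem_coe, mem_filter, mem_univ, true_and]
    intro i hi
    simp [ind, mem_union, hi]
  · intro f hf
    simp only [mem_coe, mem_filter, mem_univ, true_and] at hf
    have : suppF f \ S ∪ S = suppF f := by
      apply sdiff_union_of_subset
      intro i hi
      simp [suppF, hf i hi]
    beta_reduce
    rw [this, ind_supp]
  · intro T hT
    simp only [mem_coe, mem_powerset] at hT
    beta_reduce
    rw [supp_ind]
    have hdisj : Disjoint T S := by
      intro u huT huS i hi
      have h1 := huT hi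
      have h2 := huS hi
      have := hT h1
      simp only [mem_compl] at this
      exact absurd h2 this
    rw [Finset.union_sdiff_cancel_right hdisj]

end Generic

section RMStuff

variable {m : ℕ}

/-- monomial function -/
def mono (S : Finset (Fin m)) : (Fin m → ZMod 2) → ZMod 2 := fun x => ∏ i ∈ S, x i

/-- the standard pairing -/
def pF (u v : (Fin m → ZMod 2) → ZMod 2) : ZMod 2 := ∑ x, u x * v x

lemma pF_comm (u v : (Fin m → ZMod 2) → ZMod 2) : pF u v = pF v u := by
  unfold pF
  exact Finset.sum_congr rfl fun x _ => mul_comm _ _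

lemma pF_add_right (u v w : (Fin m → ZMod 2) → ZMod 2) :
    pF u (v + w) = pF u v + pF u w := by
  unfold pF
  rw [← Finset.sum_add_distrib]
  exact Finset.sum_congr rfl fun x _ => by simp [mul_add]

lemma pF_zero_right (u : (Fin m → ZMod 2) → ZMod 2) : pF u 0 = 0 := by
  simp [pF]

lemma pF_smul_right (c : ZMod 2) (u v : (Fin m → ZMod 2) → ZMod 2) :
    pF u (c • v) = c * pF u v := by
  unfold pF
  rw [Finset.mul_sum]
  exact Finset.sum_congr rfl fun x _ => by simp [Pi.smul_apply, smul_eq_mul]; ring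

lemma pF_card (u v : (Fin m → ZMod 2) → ZMod 2) :
    pF u v = (((suppF u ∩ suppF v).card : ℕ) : ZMod 2) := by
  unfold pF
  have hset : suppF u ∩ suppF v = univ.filter fun x => u x = 1 ∧ v x = 1 := by
    ext x
    simp [suppF, Finset.mem_filter, and_assoc]
  rw [hset, ← Finset.sum_boole]
  apply Finset.sum_congr rfl
  intro x _
  rcases z01 (u x) with h | h <;> rcases z01 (v x) with h' | h' <;>
    simp [h, h']

lemma mono_apply (S : Finset (Fin m)) (x : Fin m → ZMod 2) :
    mono S x = if ∀ i ∈ S, x i = 1 then 1 else 0 := by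
  unfold mono
  by_cases h : ∀ i ∈ S, x i = 1
  · rw [if_pos h]
    exact Finset.prod_eq_one h
  · rw [if_neg h]
    push_neg at h
    obtain ⟨i, hi, hxi⟩ := h
    have : x i = 0 := (z01 (x i)).resolve_right hxi
    exact Finset.prod_eq_zero hi this

lemma supp_mono (S : Finset (Fin m)) :
    suppF (mono S) = univ.filter fun x => ∀ i ∈ S, x i = 1 := by
  ext x
  simp [suppF, mono_apply]

lemma wt_mono (S : Finset (Fin m)) : wtF (mono S) = 2 ^ (m - S.card) := by
  have h1 : wtF (mono S) = (univ.filter fun x : Fin m → ZMod 2 => ∀ i ∈ S, x i = 1).card := by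
    unfold wtF
    congr 1
    ext x
    simp [mono_apply]
  rw [h1, card_forall_one]
  simp

lemma supp_inter_mono (S T : Finset (Fin m)) :
    suppF (mono S) ∩ suppF (mono T)
      = univ.filter fun x : Fin m → ZMod 2 => ∀ i ∈ S ∪ T, x i = 1 := by
  rw [supp_mono, supp_mono, ← Finset.filter_and]
  apply Finset.filter_congr
  intro x _
  constructor
  · rintro ⟨h1, h2⟩ i hi
    rcases Finset.mem_union.mp hi with h | h
    · exact h1 i h
    · exact h2 i h
  · intro h
    exact ⟨fun i hi => h i (Finset.mem_union_left _ hi),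
           fun i hi => h i (Finset.mem_union_right _ hi)⟩

lemma pF_mono_mono (S T : Finset (Fin m)) :
    pF (mono S) (mono T) = ((2 ^ (m - (S ∪ T).card) : ℕ) : ZMod 2) := by
  rw [pF_card, supp_inter_mono, card_forall_one]
  simp

lemma two_pow_zmod {r : ℕ} (hr : r ≠ 0) : ((2 ^ r : ℕ) : ZMod 2) = 0 := by
  push_cast
  rw [show ((2 : ZMod 2)) = 0 by decide]
  exact zero_pow hr

lemma mono_mem_RM {S : Finset (Fin m)} {r : ℕ} (h : S.card ≤ r) : mono S ∈ RM r m :=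
  Submodule.subset_span ⟨S, h, rfl⟩

lemma orth_mono_RM {S : Finset (Fin m)} {r' : ℕ} (hS : ∀ T : Finset (Fin m), T.card ≤ r' → (S ∪ T).card < m)
    {v : (Fin m → ZMod 2) → ZMod 2} (hv : v ∈ RM r' m) : pF (mono S) v = 0 := by
  induction hv using Submodule.span_induction with
  | mem w hw =>
      obtain ⟨T, hT, rfl⟩ := hw
      rw [show (fun x => ∏ i ∈ T, x i) = mono T from rfl, pF_mono_mono]
      exact two_pow_zmod (by have := hS T hT; omega)
  | zero => exact pF_zero_right _
  | add x y hx hy ihx ihy => rw [pF_add_right, ihx, ihy, add_zero]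
  | smul c x hx ihx => rw [pF_smul_right, ihx, mul_zero]

lemma orth_RM {r r' : ℕ} (h : ∀ S T : Finset (Fin m), S.card ≤ r → T.card ≤ r' → (S ∪ T).card < m)
    {u v : (Fin m → ZMod 2) → ZMod 2} (hu : u ∈ RM r m) (hv : v ∈ RM r' m) : pF u v = 0 := by
  induction hu using Submodule.span_induction with
  | mem w hw =>
      obtain ⟨S, hS, rfl⟩ := hw
      exact orth_mono_RM (fun T hT => h S T hS hT) hv
  | zero => rw [pF_comm]; exact pF_zero_right _
  | add x y hx hy ihx ihy =>
      rw [pF_comm, pF_add_right, pF_comm v x, pF_comm v y, ihx, ihy, add_zero]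
  | smul c x hx ihx =>
      rw [pF_comm, pF_smul_right, pF_comm, ihx, mul_zero]

lemma wt_add (u v : (Fin m → ZMod 2) → ZMod 2) :
    wtF (u + v) + 2 * (suppF u ∩ suppF v).card = wtF u + wtF v := by
  classical
  have hsupp : suppF (u + v) = (suppF u ∪ suppF v) \ (suppF u ∩ suppF v) := by
    ext x
    simp only [suppF, mem_filter, mem_univ, true_and, mem_sdiff, mem_union, mem_inter,
      Pi.add_apply]
    rcases z01 (u x) with h | h <;> rcases z01 (v x) with h' | h' <;> simp [h, h']
  have h1 : wtF (u + v) = (suppF (u + v)).card := rfl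
  have h2 : wtF u = (suppF u).card := rfl
  have h3 : wtF v = (suppF v).card := rfl
  rw [h1, h2, h3, hsupp, card_sdiff_of_subset (Finset.inter_subset_union)]
  have h4 := Finset.card_union_add_card_inter (suppF u) (suppF v)
  have h5 : (suppF u ∩ suppF v).card ≤ (suppF u ∪ suppF v).card :=
    Finset.card_le_card Finset.inter_subset_union
  omega

lemma doubly_even {r : ℕ} (hr : ∀ S T : Finset (Fin m), S.card ≤ r → T.card ≤ r → (S ∪ T).card < m)
    (hr2 : ∀ S : Finset (Fin m), S.card ≤ r → 2 ≤ m - S.card)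
    {u : (Fin m → ZMod 2) → ZMod 2} (hu : u ∈ RM r m) : 4 ∣ wtF u := by
  induction hu using Submodule.span_induction with
  | mem w hw =>
      obtain ⟨S, hS, rfl⟩ := hw
      rw [show (fun x => ∏ i ∈ S, x i) = mono S from rfl, wt_mono]
      have := hr2 S hS
      obtain ⟨s, hs⟩ : ∃ s, m - S.card = 2 + s := ⟨m - S.card - 2, by omega⟩
      rw [hs, pow_add]
      exact Dvd.intro _ rfl
  | zero => simp [wtF]
  | add x y hx hy ihx ihy =>
      have horth : pF x y = 0 := orth_RM hr hx hy
      rw [pF_card] at horth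
      have hdvd : 2 ∣ (suppF x ∩ suppF y).card :=
        (ZMod.natCast_eq_zero_iff _ 2).mp horth
      have := wt_add x y
      omega
  | smul c x hx ihx =>
      rcases z01 c with h | h
      · subst h; simp [wtF]
      · subst h; simpa using ihx

end RMStuff

section NT

variable {ι : Type*} [Fintype ι] [DecidableEq ι]

lemma NT1card (s : Finset ι) (w i : ℕ) (hi : i ≤ w) :
    ((powersetCard w (univ : Finset ι)).filter fun v => (s ∩ v).card = i).card
      = (s.card.choose i) * ((Fintype.card ι - s.card).choose (w - i)) := by
  rw [← Finset.card_powersetCard i s, ← Finset.card_compl s, ← Finset.card_powersetCard (w - i) sᶜ,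
    ← Finset.card_product]
  apply Finset.card_nbij' (fun v => (v ∩ s, v \ s)) (fun P => P.1 ∪ P.2)
  · intro v hv
    simp only [Finset.mem_coe, Finset.mem_filter, Finset.mem_powersetCard_univ] at hv
    obtain ⟨hw, hint⟩ := hv
    have hc : (v ∩ s).card + (v \ s).card = v.card := Finset.card_inter_add_card_sdiff v s
    simp only [Finset.mem_coe, Finset.mem_product, Finset.mem_powersetCard]
    refine ⟨⟨Finset.inter_subset_right, ?_⟩, ?_, ?_⟩
    · rw [Finset.inter_comm] at hint; exact hint
    · intro x hx
      simp only [Finset.mem_sdiff] at hx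
      simp [Finset.mem_compl, hx.2]
    · rw [Finset.inter_comm s v] at hint
      omega
  · intro P hP
    simp only [Finset.mem_coe, Finset.mem_product, Finset.mem_powersetCard] at hP
    obtain ⟨⟨h1s, h1c⟩, h2s, h2c⟩ := hP
    have hdisj : Disjoint P.1 P.2 := by
      refine Finset.disjoint_left.mpr fun x hx1 hx2 => ?_
      have := h2s hx2
      simp only [Finset.mem_compl] at this
      exact this (h1s hx1)
    have hint : s ∩ (P.1 ∪ P.2) = P.1 := by
      ext x
      simp only [Finset.mem_inter, Finset.mem_union]
      constructor
      · rintro ⟨hxs, hx12⟩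
        rcases hx12 with hx | hx
        · exact hx
        · exact absurd hxs (by have := h2s hx; simpa [Finset.mem_compl] using this)
      · intro hx
        exact ⟨h1s hx, Or.inl hx⟩
    simp only [Finset.mem_coe, Finset.mem_filter, Finset.mem_powersetCard_univ]
    rw [Finset.card_union_of_disjoint hdisj, hint, h1c, h2c]
    omega
  · intro v hv
    simp only [Finset.mem_coe, Finset.mem_filter, Finset.mem_powersetCard_univ] at hv
    ext x
    simp only [Finset.mem_union, Finset.mem_inter, Finset.mem_sdiff]
    by_cases hx : x ∈ s <;> simp [hx] <;> tauto
  · intro P hP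
    simp only [Finset.mem_coe, Finset.mem_product, Finset.mem_powersetCard] at hP
    obtain ⟨⟨h1s, h1c⟩, h2s, h2c⟩ := hP
    have h1 : (P.1 ∪ P.2) ∩ s = P.1 := by
      ext x
      simp only [Finset.mem_inter, Finset.mem_union]
      constructor
      · rintro ⟨hx12, hxs⟩
        rcases hx12 with hx | hx
        · exact hx
        · exact absurd hxs (by have := h2s hx; simpa [Finset.mem_compl] using this)
      · intro hx
        exact ⟨Or.inl hx, h1s hx⟩
    have h2 : (P.1 ∪ P.2) \ s = P.2 := by
      ext x
      simp only [Finset.mem_sdiff, Finset.mem_union]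
      constructor
      · rintro ⟨hx12, hxs⟩
        rcases hx12 with hx | hx
        · exact absurd (h1s hx) hxs
        · exact hx
      · intro hx
        have : x ∉ s := by have := h2s hx; simpa [Finset.mem_compl] using this
        exact ⟨Or.inr hx, this⟩
    beta_reduce
    rw [h1, h2]

lemma NT1 (s : Finset ι) (w : ℕ) (g : ℕ → ℤ) :
    ∑ v ∈ powersetCard w (univ : Finset ι), g ((s ∩ v).card)
      = ∑ i ∈ range (w + 1),
          ((s.card.choose i * (Fintype.card ι - s.card).choose (w - i) : ℕ) : ℤ) * g i := by
  rw [← Finset.sum_fiberwise_of_maps_to (t := range (w + 1)) (g := fun v => (s ∩ v).card)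
    (fun v hv => by
      simp only [Finset.mem_powersetCard_univ] at hv
      simp only [Finset.mem_range]
      have : (s ∩ v).card ≤ v.card := Finset.card_le_card Finset.inter_subset_right
      omega)
    (fun v => g ((s ∩ v).card))]
  apply Finset.sum_congr rfl
  intro i hi
  simp only [Finset.mem_range] at hi
  have : ∀ v ∈ (powersetCard w (univ : Finset ι)).filter fun v => (s ∩ v).card = i,
      g ((s ∩ v).card) = g i := by
    intro v hv
    simp only [Finset.mem_filter] at hv
    rw [hv.2]
  rw [Finset.sum_congr rfl this, Finset.sum_const, NT1card s w i (by omega)]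
  simp [mul_comm]

lemma coeff_one_sub_pow (e h r : ℕ) (he : e ≠ 0) :
    ((1 - Polynomial.X ^ e : Polynomial ℤ) ^ h).coeff r
      = if e ∣ r ∧ r / e ≤ h then (-1 : ℤ) ^ (r / e) * (h.choose (r / e) : ℤ) else 0 := by
  have hexp : (1 - Polynomial.X ^ e : Polynomial ℤ) ^ h
      = ∑ i ∈ range (h + 1), (-1 : Polynomial ℤ) ^ i * (h.choose i : Polynomial ℤ)
          * Polynomial.X ^ (e * i) := by
    rw [sub_eq_add_neg, add_comm, add_pow]
    apply Finset.sum_congr rfl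
    intro i _
    rw [neg_pow, one_pow, mul_one, ← pow_mul]
    ring
  rw [hexp, Polynomial.finset_sum_coeff]
  have hterm : ∀ i, ((-1) ^ i * (h.choose i : Polynomial ℤ) * Polynomial.X ^ (e * i)).coeff r
      = if e * i = r then (-1) ^ i * (h.choose i : ℤ) else 0 := by
    intro i
    rw [show ((-1 : Polynomial ℤ) ^ i * (h.choose i : Polynomial ℤ))
          = Polynomial.C ((-1) ^ i * (h.choose i : ℤ)) from by
        rw [map_mul, map_pow, map_natCast]
        norm_num,
      Polynomial.coeff_C_mul_X_pow]
    split
    · next hh => rw [if_pos hh.symm]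
    · next hh => rw [if_neg fun hc => hh hc.symm]
  rw [Finset.sum_congr rfl fun i _ => hterm i]
  by_cases hcond : e ∣ r ∧ r / e ≤ h
  · obtain ⟨⟨c, rfl⟩, hch⟩ := hcond
    rw [Nat.mul_div_cancel_left c (Nat.pos_of_ne_zero he)] at hch
    rw [Finset.sum_eq_single_of_mem c (Finset.mem_range.mpr (by omega))]
    · rw [if_pos rfl, if_pos ⟨Dvd.intro c rfl, by
        rwa [Nat.mul_div_cancel_left c (Nat.pos_of_ne_zero he)]⟩,
        Nat.mul_div_cancel_left c (Nat.pos_of_ne_zero he)]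
    · intro b _ hb
      rw [if_neg]
      intro hc
      exact hb (by
        have := Nat.eq_of_mul_eq_mul_left (Nat.pos_of_ne_zero he) hc
        omega)
  · rw [if_neg hcond]
    apply Finset.sum_eq_zero
    intro i hi
    simp only [Finset.mem_range] at hi
    rw [if_neg]
    intro hc
    apply hcond
    subst hc
    rw [Nat.mul_div_cancel_left i (Nat.pos_of_ne_zero he)]
    exact ⟨Dvd.intro i rfl, by omega⟩

lemma coeff_one_sub_X_pow (h i : ℕ) :
    ((1 - Polynomial.X : Polynomial ℤ) ^ h).coeff i = (-1 : ℤ) ^ i * (h.choose i : ℤ) := by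
  have := coeff_one_sub_pow 1 h i one_ne_zero
  rw [pow_one, Nat.div_one] at this
  rw [this]
  by_cases hih : i ≤ h
  · rw [if_pos ⟨one_dvd _, hih⟩]
  · rw [if_neg (fun hc => hih hc.2), Nat.choose_eq_zero_of_lt (by omega)]
    simp

lemma NT2 (h t : ℕ) (ht : t ≤ h) :
    ∑ i ∈ range (2 * t + 1), (-1 : ℤ) ^ i * (h.choose i) * (h.choose (2 * t - i))
      = (-1 : ℤ) ^ t * (h.choose t : ℤ) := by
  have key : ((1 - Polynomial.X : Polynomial ℤ) ^ h) * ((Polynomial.X + 1) ^ h)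
      = (1 - Polynomial.X ^ 2) ^ h := by
    rw [← mul_pow]
    congr 1
    ring
  have hco := congrArg (fun p : Polynomial ℤ => p.coeff (2 * t)) key
  rw [Polynomial.coeff_mul, Finset.Nat.sum_antidiagonal_eq_sum_range_succ_mk] at hco
  rw [coeff_one_sub_pow 2 h (2 * t) two_ne_zero] at hco
  have h2t : (2 * t) / 2 = t := by omega
  rw [h2t, if_pos ⟨⟨t, rfl⟩, ht⟩] at hco
  rw [← hco]
  apply Finset.sum_congr rfl
  intro i _
  rw [coeff_one_sub_X_pow, Polynomial.coeff_X_add_one_pow]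

lemma Tpos (h : ℕ) (hcard : Fintype.card ι = 2 * h) (s : Finset ι) (h4 : 4 ∣ s.card) :
    0 < ∑ v ∈ powersetCard h (univ : Finset ι), (-1 : ℤ) ^ ((s ∩ v).card) := by
  obtain ⟨q, hq⟩ := h4
  have hjn : s.card ≤ Fintype.card ι := Finset.card_le_univ s
  set t := 2 * q with htdef
  have hst : s.card = 2 * t := by omega
  have ht : t ≤ h := by omega
  have hconst : ∀ u ∈ powersetCard s.card (univ : Finset ι),
      (∑ v ∈ powersetCard h (univ : Finset ι), (-1 : ℤ) ^ ((u ∩ v).card))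
        = ∑ v ∈ powersetCard h (univ : Finset ι), (-1 : ℤ) ^ ((s ∩ v).card) := by
    intro u hu
    rw [NT1 u h (fun c => (-1) ^ c), NT1 s h (fun c => (-1) ^ c),
      Finset.mem_powersetCard_univ.mp hu]
  have hconst2 : ∀ v ∈ powersetCard h (univ : Finset ι),
      (∑ u ∈ powersetCard s.card (univ : Finset ι), (-1 : ℤ) ^ ((u ∩ v).card))
        = (-1) ^ t * (h.choose t) := by
    intro v hv
    have hvc := Finset.mem_powersetCard_univ.mp hv
    calc ∑ u ∈ powersetCard s.card (univ : Finset ι), (-1 : ℤ) ^ ((u ∩ v).card)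
        = ∑ u ∈ powersetCard s.card (univ : Finset ι), (-1 : ℤ) ^ ((v ∩ u).card) :=
          Finset.sum_congr rfl (fun u _ => by rw [Finset.inter_comm])
      _ = ∑ i ∈ range (s.card + 1),
            ((v.card.choose i * (Fintype.card ι - v.card).choose (s.card - i) : ℕ) : ℤ)
              * (-1) ^ i := NT1 v s.card (fun c => (-1) ^ c)
      _ = ∑ i ∈ range (2 * t + 1), (-1 : ℤ) ^ i * (h.choose i) * (h.choose (2 * t - i)) := by
          rw [hst]
          apply Finset.sum_congr rfl
          intro i _
          rw [hvc, hcard]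
          have : 2 * h - h = h := by omega
          rw [this]
          push_cast
          ring
      _ = (-1) ^ t * (h.choose t) := NT2 h t ht
  have hlhs : ∑ u ∈ powersetCard s.card (univ : Finset ι),
      ∑ v ∈ powersetCard h (univ : Finset ι), (-1 : ℤ) ^ ((u ∩ v).card)
      = ((Fintype.card ι).choose s.card : ℤ)
          * ∑ v ∈ powersetCard h (univ : Finset ι), (-1 : ℤ) ^ ((s ∩ v).card) := by
    rw [Finset.sum_congr rfl hconst, Finset.sum_const, Finset.card_powersetCard,
      Finset.card_univ, nsmul_eq_mul]
  have hrhs : ∑ u ∈ powersetCard s.card (univ : Finset ι),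
      ∑ v ∈ powersetCard h (univ : Finset ι), (-1 : ℤ) ^ ((u ∩ v).card)
      = ((Fintype.card ι).choose h : ℤ) * ((-1) ^ t * (h.choose t)) := by
    rw [Finset.sum_comm, Finset.sum_congr rfl hconst2, Finset.sum_const,
      Finset.card_powersetCard, Finset.card_univ, nsmul_eq_mul]
  have hkey := hlhs.symm.trans hrhs
  have hpos1 : 0 < ((Fintype.card ι).choose s.card : ℤ) := by
    exact_mod_cast Nat.choose_pos hjn
  have hneg1 : (-1 : ℤ) ^ t = 1 := by
    rw [htdef, pow_mul]
    norm_num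
  have hpos2 : 0 < ((Fintype.card ι).choose h : ℤ) * ((-1 : ℤ) ^ t * (h.choose t)) := by
    have h1 : (0 : ℤ) < (Fintype.card ι).choose h := by
      exact_mod_cast Nat.choose_pos (by omega)
    have h2 : (0 : ℤ) < h.choose t := by exact_mod_cast Nat.choose_pos ht
    rw [hneg1]
    nlinarith
  nlinarith [hkey, hpos1, hpos2]

end NT

section Main

variable {m : ℕ}

lemma addself (u : (Fin m → ZMod 2) → ZMod 2) : u + u = 0 := by
  funext x
  have h : ∀ z : ZMod 2, z + z = 0 := by decide
  exact h (u x)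

lemma suppF_injective {α : Type*} [Fintype α] [DecidableEq α] :
    Function.Injective (suppF : (α → ZMod 2) → Finset α) := by
  intro u v h
  rw [← ind_supp u, ← ind_supp v, h]

lemma wtF_eq_card_suppF (f : (Fin m → ZMod 2) → ZMod 2) : wtF f = (suppF f).card := by
  unfold wtF suppF
  congr 1

lemma mono_apply' (S : Finset (Fin m)) (x : Fin m → ZMod 2) :
    mono S x = if S ⊆ suppF x then 1 else 0 := by
  rw [mono_apply]
  have hiff : (∀ i ∈ S, x i = 1) ↔ S ⊆ suppF x := by
    constructor
    · intro h i hi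
      simp [suppF, h i hi]
    · intro h i hi
      simpa [suppF] using h hi
  by_cases h : S ⊆ suppF x
  · rw [if_pos (hiff.mpr h), if_pos h]
  · rw [if_neg (fun hc => h (hiff.mp hc)), if_neg h]

lemma card_between {α : Type*} [Fintype α] [DecidableEq α] (Z W : Finset α)
    [DecidablePred fun S : Finset α => Z ⊆ S ∧ S ⊆ W] :
    ((univ : Finset (Finset α)).filter fun S => Z ⊆ S ∧ S ⊆ W).card
      = if Z ⊆ W then 2 ^ ((W \ Z).card) else 0 := by
  by_cases hZW : Z ⊆ W
  · rw [if_pos hZW, ← Finset.card_powerset]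
    apply Finset.card_nbij' (fun S => S \ Z) (fun T => T ∪ Z)
    · intro S hS
      simp only [Finset.mem_coe, Finset.mem_filter, Finset.mem_univ, true_and] at hS
      simp only [Finset.mem_coe, Finset.mem_powerset]
      intro i hi
      simp only [Finset.mem_sdiff] at hi ⊢
      exact ⟨hS.2 hi.1, hi.2⟩
    · intro T hT
      simp only [Finset.mem_coe, Finset.mem_powerset] at hT
      simp only [Finset.mem_coe, Finset.mem_filter, Finset.mem_univ, true_and]
      constructor
      · exact Finset.subset_union_right
      · intro i hi
        rcases Finset.mem_union.mp hi with h | h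
        · exact (Finset.mem_sdiff.mp (hT h)).1
        · exact hZW h
    · intro S hS
      simp only [Finset.mem_coe, Finset.mem_filter, Finset.mem_univ, true_and] at hS
      exact Finset.sdiff_union_of_subset hS.1
    · intro T hT
      simp only [Finset.mem_coe, Finset.mem_powerset] at hT
      have hd : Disjoint T Z := by
        refine Finset.disjoint_left.mpr fun i hiT hiZ => ?_
        exact (Finset.mem_sdiff.mp (hT hiT)).2 hiZ
      beta_reduce
      rw [Finset.union_sdiff_distrib, Finset.sdiff_self, Finset.union_empty,
        Finset.sdiff_eq_self_of_disjoint hd]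
  · rw [if_neg hZW, Finset.card_eq_zero, Finset.filter_eq_empty_iff]
    intro S _
    rintro ⟨h1, h2⟩
    exact hZW (h1.trans h2)

/-- the dual decomposition functions -/
def eF (S : Finset (Fin m)) : (Fin m → ZMod 2) → ZMod 2 :=
  ∑ U ∈ (Sᶜ : Finset (Fin m)).powerset, mono U

lemma eF_apply (S : Finset (Fin m)) (x : Fin m → ZMod 2) :
    eF S x = if suppF x ⊆ S then 1 else 0 := by
  unfold eF
  rw [Finset.sum_apply]
  have h1 : ∀ U ∈ (Sᶜ : Finset (Fin m)).powerset,
      mono U x = if U ∈ (suppF x).powerset then 1 else 0 := by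
    intro U _
    rw [mono_apply']
    simp [Finset.mem_powerset]
  rw [Finset.sum_congr rfl h1, Finset.sum_boole]
  have h2 : (Sᶜ : Finset (Fin m)).powerset.filter (fun U => U ∈ (suppF x).powerset)
      = (Sᶜ ∩ suppF x).powerset := by
    ext U
    simp only [Finset.mem_filter, Finset.mem_powerset, Finset.subset_inter_iff]
  rw [h2, Finset.card_powerset]
  by_cases hsub : suppF x ⊆ S
  · have he : Sᶜ ∩ suppF x = ∅ := by
      rw [Finset.eq_empty_iff_forall_notMem]
      intro i hi
      simp only [Finset.mem_inter, Finset.mem_compl] at hi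
      exact hi.1 (hsub hi.2)
    rw [if_pos hsub, he]
    simp
  · have hne : (Sᶜ ∩ suppF x).card ≠ 0 := by
      rw [Ne, Finset.card_eq_zero, Finset.eq_empty_iff_forall_notMem]
      intro hcon
      apply hsub
      intro i hi
      by_contra hiS
      exact hcon i (by simp [Finset.mem_inter, Finset.mem_compl, hiS, hi])
    rw [if_neg hsub, two_pow_zmod hne]

lemma decomp (a : (Fin m → ZMod 2) → ZMod 2) :
    a = ∑ S : Finset (Fin m), pF a (mono S) • eF S := by
  funext x₀
  rw [Finset.sum_apply]
  have h1 : ∀ S : Finset (Fin m), (pF a (mono S) • eF S) x₀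
      = if suppF x₀ ⊆ S then pF a (mono S) else 0 := by
    intro S
    rw [Pi.smul_apply, smul_eq_mul, eF_apply]
    split <;> simp
  rw [Finset.sum_congr rfl fun S _ => h1 S]
  have h2 : ∀ S : Finset (Fin m), (if suppF x₀ ⊆ S then pF a (mono S) else 0)
      = ∑ x : Fin m → ZMod 2, (if suppF x₀ ⊆ S then a x * mono S x else 0) := by
    intro S
    split
    · rfl
    · rw [Finset.sum_const_zero]
  rw [Finset.sum_congr rfl fun S _ => h2 S, Finset.sum_comm]
  have h3 : ∀ x : Fin m → ZMod 2,
      ∑ S : Finset (Fin m), (if suppF x₀ ⊆ S then a x * mono S x else 0)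
        = a x * ∑ S : Finset (Fin m), (if suppF x₀ ⊆ S ∧ S ⊆ suppF x then (1 : ZMod 2) else 0) := by
    intro x
    rw [Finset.mul_sum]
    apply Finset.sum_congr rfl
    intro S _
    rw [mono_apply']
    by_cases hc1 : suppF x₀ ⊆ S <;> by_cases hc2 : S ⊆ suppF x <;>
      simp [hc1, hc2]
  rw [Finset.sum_congr rfl fun x _ => h3 x]
  have h4 : ∀ x : Fin m → ZMod 2,
      (∑ S : Finset (Fin m), if suppF x₀ ⊆ S ∧ S ⊆ suppF x then (1 : ZMod 2) else 0)
        = if suppF x = suppF x₀ then 1 else 0 := by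
    intro x
    rw [Finset.sum_boole, card_between]
    by_cases hc : suppF x₀ ⊆ suppF x
    · rw [if_pos hc]
      by_cases heq : suppF x = suppF x₀
      · rw [if_pos heq]
        have he : suppF x \ suppF x₀ = ∅ := by rw [heq]; exact Finset.sdiff_self _
        rw [he]
        simp
      · rw [if_neg heq]
        have hne : (suppF x \ suppF x₀).card ≠ 0 := by
          rw [Ne, Finset.card_eq_zero, ← Ne, ← Finset.nonempty_iff_ne_empty]
          obtain ⟨i, hi1, hi2⟩ := Finset.exists_of_ssubset (hc.ssubset_of_ne (Ne.symm heq))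
          exact ⟨i, Finset.mem_sdiff.mpr ⟨hi1, hi2⟩⟩
        exact_mod_cast two_pow_zmod hne
    · have hne2 : ¬(suppF x = suppF x₀) := fun heq => hc (by rw [heq])
      rw [if_neg hc, if_neg hne2]
      simp
  rw [Finset.sum_congr rfl fun x _ => by rw [h4 x]]
  rw [Finset.sum_eq_single_of_mem x₀ (Finset.mem_univ x₀)]
  · rw [if_pos rfl, mul_one]
  · intro x _ hx
    have hne3 : suppF x ≠ suppF x₀ := fun heq => hx (suppF_injective heq)
    rw [if_neg hne3, mul_zero]

lemma mem_RM_of_pairing (a : (Fin m → ZMod 2) → ZMod 2) (k : ℕ)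
    (h : ∀ S : Finset (Fin m), pF a (mono S) ≠ 0 → m - S.card ≤ k) : a ∈ RM k m := by
  rw [show a = ∑ S : Finset (Fin m), pF a (mono S) • eF S from decomp a]
  apply Submodule.sum_mem
  intro S _
  by_cases hS : pF a (mono S) = 0
  · rw [hS, zero_smul]
    exact Submodule.zero_mem _
  · apply Submodule.smul_mem
    unfold eF
    apply Submodule.sum_mem
    intro U hU
    apply mono_mem_RM
    have hUc : U ⊆ (Sᶜ : Finset (Fin m)) := Finset.mem_powerset.mp hU
    have : U.card ≤ (Sᶜ : Finset (Fin m)).card := Finset.card_le_card hUc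
    rw [Finset.card_compl, Fintype.card_fin] at this
    exact this.trans (h S hS)

lemma sum_χ_zero {D' : Submodule (ZMod 2) ((Fin m → ZMod 2) → ZMod 2)}
    {w : (Fin m → ZMod 2) → ZMod 2} [DecidablePred (· ∈ D')]
    (hex : ∃ u₀ ∈ D', pF u₀ w ≠ 0) :
    ∑ u ∈ univ.filter (· ∈ D'), χ (pF u w) = 0 := by
  obtain ⟨u₀, hu₀D, hu₀⟩ := hex
  have h1 : pF u₀ w = 1 := (z01 _).resolve_left hu₀
  have hcancel : ∀ u : (Fin m → ZMod 2) → ZMod 2, u + u₀ + u₀ = u := by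
    intro u
    rw [add_assoc, addself, add_zero]
  have hbij : ∑ u ∈ univ.filter (· ∈ D'), χ (pF u w)
      = ∑ u ∈ univ.filter (· ∈ D'), χ (pF (u + u₀) w) := by
    apply Finset.sum_nbij' (fun u => u + u₀) (fun u => u + u₀)
    · intro u hu
      simp only [Finset.mem_filter, Finset.mem_univ, true_and] at hu ⊢
      exact Submodule.add_mem _ hu hu₀D
    · intro u hu
      simp only [Finset.mem_filter, Finset.mem_univ, true_and] at hu ⊢
      exact Submodule.add_mem _ hu hu₀D
    · intro u _
      exact hcancel u
    · intro u _
      exact hcancel u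
    · intro u _
      rw [hcancel u]
  have hneg : ∀ u : (Fin m → ZMod 2) → ZMod 2, χ (pF (u + u₀) w) = - χ (pF u w) := by
    intro u
    rw [pF_comm, pF_add_right, pF_comm w u, pF_comm w u₀, h1, χ_add, χ_one]
    ring
  rw [Finset.sum_congr rfl fun u _ => hneg u, Finset.sum_neg_distrib] at hbij
  linarith

end Main

end RMAux

set_option maxHeartbeats 1000000 in
open RMAux Finset in
theorem RM_coset_fewer_balanced (m k : ℕ) (hm : 2 ≤ m) (hk : m - 1 ≤ 2 * k)
    (a : (Fin m → ZMod 2) → ZMod 2) (ha : a ∉ RM k m) :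
    {v | (∃ c ∈ RM k m, v = c + a) ∧ wtF v = 2 ^ (m - 1)}.ncard <
      {v | v ∈ RM k m ∧ wtF v = 2 ^ (m - 1)}.ncard := by
  classical
  obtain ⟨S₀, hS₀p, hS₀c⟩ : ∃ S : Finset (Fin m), pF a (mono S) ≠ 0 ∧ ¬(m - S.card ≤ k) := by
    by_contra hcon
    push_neg at hcon
    exact ha (mem_RM_of_pairing a k hcon)
  have hScm : S₀.card ≤ m := by
    have := Finset.card_le_univ S₀
    simpa using this
  have hkm : k < m := by omega
  have hk1 : 1 ≤ k := by omega
  set r : ℕ := m - k - 1 with hr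
  have hS₀r : S₀.card ≤ r := by omega
  have hDD : ∀ S T : Finset (Fin m), S.card ≤ r → T.card ≤ r → (S ∪ T).card < m := by
    intro S T hS hT
    have := Finset.card_union_le S T
    omega
  have hDC : ∀ S T : Finset (Fin m), S.card ≤ r → T.card ≤ k → (S ∪ T).card < m := by
    intro S T hS hT
    have := Finset.card_union_le S T
    omega
  have hr2 : ∀ S : Finset (Fin m), S.card ≤ r → 2 ≤ m - S.card := by
    intro S hS
    omega
  set D := RM r m with hD
  set Df := (univ : Finset ((Fin m → ZMod 2) → ZMod 2)).filter (· ∈ D) with hDf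
  set Bal := (univ : Finset ((Fin m → ZMod 2) → ZMod 2)).filter
    (fun v => wtF v = 2 ^ (m - 1)) with hBal
  set T : ((Fin m → ZMod 2) → ZMod 2) → ℤ := fun u => ∑ v ∈ Bal, χ (pF u v) with hT
  have hex : ∀ w, w ∉ RM k m → ∃ u₀ ∈ D, pF u₀ w ≠ 0 := by
    intro w hw
    obtain ⟨S, hSp, hSc⟩ : ∃ S : Finset (Fin m), pF w (mono S) ≠ 0 ∧ ¬(m - S.card ≤ k) := by
      by_contra hcon
      push_neg at hcon
      exact hw (mem_RM_of_pairing w k hcon)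
    exact ⟨mono S, mono_mem_RM (by omega), by rwa [pF_comm]⟩
  have hchar : ∀ w, ∑ u ∈ Df, χ (pF u w) = if w ∈ RM k m then (Df.card : ℤ) else 0 := by
    intro w
    by_cases hw : w ∈ RM k m
    · rw [if_pos hw]
      have h1 : ∀ u ∈ Df, χ (pF u w) = 1 := by
        intro u hu
        rw [hDf] at hu
        have huD : u ∈ D := (Finset.mem_filter.mp hu).2
        rw [orth_RM hDC huD hw, χ_zero]
      rw [Finset.sum_congr rfl h1, Finset.sum_const, nsmul_eq_mul, mul_one]
    · rw [if_neg hw]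
      rw [hDf]
      exact sum_χ_zero (hex w hw)
  have hkey : ∀ b, ∑ u ∈ Df, χ (pF u b) * T u
      = (Df.card : ℤ) * ((Bal.filter fun v => v + b ∈ RM k m).card : ℤ) := by
    intro b
    have h1 : ∀ u ∈ Df, χ (pF u b) * T u = ∑ v ∈ Bal, χ (pF u (b + v)) := by
      intro u _
      rw [hT]
      simp only
      rw [Finset.mul_sum]
      apply Finset.sum_congr rfl
      intro v _
      rw [← χ_add, ← pF_add_right]
    rw [Finset.sum_congr rfl h1, Finset.sum_comm]
    have h2 : ∀ v ∈ Bal, ∑ u ∈ Df, χ (pF u (b + v))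
        = if v + b ∈ RM k m then (Df.card : ℤ) else 0 := by
      intro v _
      rw [hchar (b + v), add_comm b v]
    rw [Finset.sum_congr rfl h2, ← Finset.sum_filter, Finset.sum_const, nsmul_eq_mul]
    exact mul_comm _ _
  have hXcard : Fintype.card (Fin m → ZMod 2) = 2 * 2 ^ (m - 1) := by
    have h1 : Fintype.card (Fin m → ZMod 2) = 2 ^ m := by
      rw [Fintype.card_fun]
      simp
    have h2 : 2 * 2 ^ (m - 1) = 2 ^ m := by
      rw [← pow_succ']
      congr 1
      omega
    rw [h1, ← h2]
  have hTpos : ∀ u ∈ Df, 0 < T u := by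
    intro u hu
    rw [hDf] at hu
    have huD : u ∈ D := (Finset.mem_filter.mp hu).2
    have hu4 : 4 ∣ (suppF u).card := by
      rw [← wtF_eq_card_suppF]
      exact doubly_even hDD hr2 huD
    have h1 : T u = ∑ v ∈ Bal, (-1 : ℤ) ^ ((suppF u ∩ suppF v).card) := by
      rw [hT]
      apply Finset.sum_congr rfl
      intro v _
      rw [pF_card, χ_natCast]
    have h2 : ∑ v ∈ Bal, (-1 : ℤ) ^ ((suppF u ∩ suppF v).card)
        = ∑ W ∈ Finset.powersetCard (2 ^ (m - 1)) univ, (-1 : ℤ) ^ ((suppF u ∩ W).card) := by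
      apply Finset.sum_nbij' (fun v => suppF v) (fun W => ind W)
      · intro v hv
        rw [hBal] at hv
        rw [Finset.mem_powersetCard_univ, ← wtF_eq_card_suppF]
        exact (Finset.mem_filter.mp hv).2
      · intro W hW
        rw [hBal]
        simp only [Finset.mem_filter, Finset.mem_univ, true_and]
        rw [wtF_eq_card_suppF, supp_ind]
        exact Finset.mem_powersetCard_univ.mp hW
      · intro v _
        exact ind_supp v
      · intro W _
        exact supp_ind W
      · intro v _
        rfl
    rw [h1, h2]
    exact Tpos (2 ^ (m - 1)) hXcard (suppF u) hu4
  set u₀ := mono S₀ with hu₀def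
  have hu₀D : u₀ ∈ D := mono_mem_RM hS₀r
  have hu₀Df : u₀ ∈ Df := by
    rw [hDf]
    simp only [Finset.mem_filter, Finset.mem_univ, true_and]
    exact hu₀D
  have hχu₀ : χ (pF u₀ a) = -1 := by
    have h1 : pF u₀ a = 1 := by
      rw [pF_comm]
      exact (z01 _).resolve_left hS₀p
    rw [h1, χ_one]
  have hstep : ∑ u ∈ Df, χ (pF u a) * T u ≤ (∑ u ∈ Df, T u) - 2 * T u₀ := by
    rw [← Finset.add_sum_erase Df (fun u => χ (pF u a) * T u) hu₀Df,
      ← Finset.add_sum_erase Df T hu₀Df]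
    have hb : ∑ u ∈ Df.erase u₀, χ (pF u a) * T u ≤ ∑ u ∈ Df.erase u₀, T u := by
      apply Finset.sum_le_sum
      intro i hi
      have hTi := hTpos i (Finset.mem_of_mem_erase hi)
      rcases χ_cases (pF i a) with h | h <;> rw [h] <;> nlinarith
    rw [hχu₀]
    linarith
  have hT0 : ∑ u ∈ Df, T u = (Df.card : ℤ) * ((Bal.filter fun v => v ∈ RM k m).card : ℤ) := by
    have h0 := hkey 0
    have h1 : ∀ u ∈ Df, χ (pF u 0) * T u = T u := by
      intro u _
      rw [pF_zero_right, χ_zero, one_mul]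
    rw [Finset.sum_congr rfl h1] at h0
    rw [h0]
    congr 2
    congr 1
    apply Finset.filter_congr
    intro v _
    rw [add_zero]
  have hDfpos : 0 < Df.card := by
    apply Finset.card_pos.mpr
    refine ⟨0, ?_⟩
    rw [hDf]
    simp only [Finset.mem_filter, Finset.mem_univ, true_and]
    exact Submodule.zero_mem _
  have hc : (0 : ℤ) < (Df.card : ℤ) := by exact_mod_cast hDfpos
  have hmul : (Df.card : ℤ) * ((Bal.filter fun v => v + a ∈ RM k m).card : ℤ)
      < (Df.card : ℤ) * ((Bal.filter fun v => v ∈ RM k m).card : ℤ) := by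
    have h1 := hkey a
    have h2 := hTpos u₀ hu₀Df
    linarith
  have hfinal : (Bal.filter fun v => v + a ∈ RM k m).card
      < (Bal.filter fun v => v ∈ RM k m).card := by
    have := lt_of_mul_lt_mul_left hmul (le_of_lt hc)
    exact_mod_cast this
  have hset1 : {v | (∃ c ∈ RM k m, v = c + a) ∧ wtF v = 2 ^ (m - 1)}
      = ↑(Bal.filter fun v => v + a ∈ RM k m) := by
    ext v
    rw [hBal]
    simp only [Set.mem_setOf_eq, Finset.coe_filter, Finset.mem_filter, Finset.mem_univ,
      true_and, Set.mem_setOf_eq]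
    constructor
    · rintro ⟨⟨c, hcm, rfl⟩, hwt⟩
      refine ⟨hwt, ?_⟩
      rw [add_assoc, addself, add_zero]
      exact hcm
    · rintro ⟨hwt, hmem⟩
      refine ⟨⟨v + a, hmem, ?_⟩, hwt⟩
      rw [add_assoc, addself, add_zero]
  have hset2 : {v | v ∈ RM k m ∧ wtF v = 2 ^ (m - 1)}
      = ↑(Bal.filter fun v => v ∈ RM k m) := by
    ext v
    rw [hBal]
    simp only [Set.mem_setOf_eq, Finset.coe_filter, Finset.mem_filter, Finset.mem_univ,
      true_and, Set.mem_setOf_eq]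
    tauto
  rw [hset1, hset2, Set.ncard_coe_finset, Set.ncard_coe_finset]
  exact hfinal
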